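/- Let γ = diag(cos θ, cos φ, cos θ cos φ). If there exist two linearly independent unit vectors u, w ∈ ℝ³ with ‖γ u‖ = ‖γ w‖ = 1, then γ is orthogonal (i.e., |cos θ| = |cos φ| = 1). -/

import Mathlib

open RealInnerProductSpace Real

noncomputable def act (M : Matrix (Fin 3) (Fin 3) ℝ) (x : EuclideanSpace ℝ (Fin 3)) :
    EuclideanSpace ℝ (Fin 3) := Matrix.toEuclideanLin M x

lemma norm_sq3 (v : EuclideanSpace ℝ (Fin 3)) : ‖v‖^2 = v 0^2 + v 1^2 + v 2^2 := by
  rw [EuclideanSpace.norm_eq, Real.sq_sqrt (by positivity)]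
  simp [Fin.sum_univ_three, sq_abs]

lemma act_diag (d : Fin 3 → ℝ) (v : EuclideanSpace ℝ (Fin 3)) (i : Fin 3) :
    act (Matrix.diagonal d) v i = d i * v i := by
  show (Matrix.diagonal d).mulVec (WithLp.equiv 2 _ v) i = _
  rw [Matrix.mulVec_diagonal]; rfl

lemma key (c d : ℝ) (hc : c^2 ≤ 1) (hd : d^2 ≤ 1) (v : EuclideanSpace ℝ (Fin 3))
    (hv : ‖v‖ = 1) (hgv : ‖act (Matrix.diagonal ![c, d, c * d]) v‖ = 1) :
    (1 - c^2) * v 0 ^ 2 = 0 ∧ (1 - d^2) * v 1 ^ 2 = 0 ∧ (1 - (c*d)^2) * v 2 ^ 2 = 0 := by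
  have h1 := norm_sq3 v
  have h2 := norm_sq3 (act (Matrix.diagonal ![c, d, c * d]) v)
  rw [hv] at h1
  rw [hgv] at h2
  rw [act_diag, act_diag, act_diag] at h2
  simp only [Matrix.cons_val_zero, Matrix.cons_val_one, Matrix.head_cons,
    Matrix.cons_val_two, Matrix.tail_cons] at h2
  have hcd : (c*d)^2 ≤ 1 := by nlinarith
  have e1 : (1 - c^2) * v 0 ^ 2 ≥ 0 := by nlinarith [sq_nonneg (v 0)]
  have e2 : (1 - d^2) * v 1 ^ 2 ≥ 0 := by nlinarith [sq_nonneg (v 1)]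
  have e3 : (1 - (c*d)^2) * v 2 ^ 2 ≥ 0 := by nlinarith [sq_nonneg (v 2)]
  have hsum : (1 - c^2) * v 0 ^ 2 + (1 - d^2) * v 1 ^ 2 + (1 - (c*d)^2) * v 2 ^ 2 = 0 := by
    nlinarith
  refine ⟨by linarith, by linarith, by linarith⟩

lemma prop_of_support (i : Fin 3) (u w : EuclideanSpace ℝ (Fin 3))
    (hu : ∀ j, j ≠ i → u j = 0) (hw : ∀ j, j ≠ i → w j = 0) (hwne : w ≠ 0) :
    ∃ a : ℝ, a • w = u := by
  have hwi : w i ≠ 0 := by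
    intro h
    apply hwne
    ext j
    by_cases hj : j = i
    · rw [hj]; exact h
    · exact hw j hj
  refine ⟨u i / w i, ?_⟩
  ext j
  show (u i / w i) * w j = u j
  by_cases hj : j = i
  · rw [hj, div_mul_cancel₀ _ hwi]
  · rw [hu j hj, hw j hj, mul_zero]

theorem stmt_12 (θ φ : ℝ) (u w : EuclideanSpace ℝ (Fin 3))
    (hu : ‖u‖ = 1) (hw : ‖w‖ = 1) (hind : LinearIndependent ℝ ![u, w])
    (hgu : ‖act (Matrix.diagonal ![Real.cos θ, Real.cos φ, Real.cos θ * Real.cos φ]) u‖ = 1)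
    (hgw : ‖act (Matrix.diagonal ![Real.cos θ, Real.cos φ, Real.cos θ * Real.cos φ]) w‖ = 1) :
    |Real.cos θ| = 1 ∧ |Real.cos φ| = 1 := by
  set c := Real.cos θ
  set d := Real.cos φ
  have hc : c^2 ≤ 1 := by have := Real.neg_one_le_cos θ; have := Real.cos_le_one θ; nlinarith
  have hd : d^2 ≤ 1 := by have := Real.neg_one_le_cos φ; have := Real.cos_le_one φ; nlinarith
  obtain ⟨u0, u1, u2⟩ := key c d hc hd u hu hgu
  obtain ⟨w0, w1, w2⟩ := key c d hc hd w hw hgw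
  rw [linearIndependent_fin2] at hind
  obtain ⟨hwne, hna⟩ := hind
  simp only [Matrix.cons_val_one, Matrix.head_cons, Matrix.cons_val_zero] at hwne hna
  have vzero : ∀ (v : EuclideanSpace ℝ (Fin 3)), (1-c^2) * v 0 ^2 = 0 → (1-d^2) * v 1^2 = 0 →
      (1-(c*d)^2) * v 2 ^2 = 0 → ‖v‖ = 1 →
      (c^2 = 1 ∨ v 0 = 0) ∧ (d^2 = 1 ∨ v 1 = 0) ∧ ((c*d)^2 = 1 ∨ v 2 = 0) := by
    intro v h0 h1 h2 _
    refine ⟨?_, ?_, ?_⟩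
    · rcases mul_eq_zero.mp h0 with h | h
      · left; linarith
      · right; exact pow_eq_zero_iff (by norm_num) |>.mp h
    · rcases mul_eq_zero.mp h1 with h | h
      · left; linarith
      · right; exact pow_eq_zero_iff (by norm_num) |>.mp h
    · rcases mul_eq_zero.mp h2 with h | h
      · left; linarith
      · right; exact pow_eq_zero_iff (by norm_num) |>.mp h
  obtain ⟨hu0, hu1, hu2⟩ := vzero u u0 u1 u2 hu
  obtain ⟨hw0, hw1, hw2⟩ := vzero w w0 w1 w2 hw
  have habs : ∀ x : ℝ, x^2 = 1 → |x| = 1 := by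
    intro x hx
    have := abs_nonneg x
    nlinarith [sq_abs x]
  have hne0 : ∀ j : Fin 3, j ≠ 0 → j = 1 ∨ j = 2 := by decide
  have hne1 : ∀ j : Fin 3, j ≠ 1 → j = 0 ∨ j = 2 := by decide
  by_cases hc1 : c^2 = 1
  · by_cases hd1 : d^2 = 1
    · exact ⟨habs c hc1, habs d hd1⟩
    · exfalso
      have hcd1 : (c*d)^2 ≠ 1 := by rw [mul_pow, hc1, one_mul]; exact hd1
      have hU1 := hu1.resolve_left hd1
      have hU2 := hu2.resolve_left hcd1
      have hW1 := hw1.resolve_left hd1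
      have hW2 := hw2.resolve_left hcd1
      obtain ⟨a, ha⟩ := prop_of_support 0 u w
        (fun j hj => by rcases hne0 j hj with h | h <;> rw [h] <;> assumption)
        (fun j hj => by rcases hne0 j hj with h | h <;> rw [h] <;> assumption) hwne
      exact hna a ha
  · have hc1' : c^2 < 1 := lt_of_le_of_ne hc hc1
    have hU0 := hu0.resolve_left hc1
    have hW0 := hw0.resolve_left hc1
    by_cases hd1 : d^2 = 1
    · exfalso
      have hcd1 : (c*d)^2 ≠ 1 := by rw [mul_pow, hd1, mul_one]; exact hc1
      have hU2 := hu2.resolve_left hcd1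
      have hW2 := hw2.resolve_left hcd1
      obtain ⟨a, ha⟩ := prop_of_support 1 u w
        (fun j hj => by rcases hne1 j hj with h | h <;> rw [h] <;> assumption)
        (fun j hj => by rcases hne1 j hj with h | h <;> rw [h] <;> assumption) hwne
      exact hna a ha
    · exfalso
      have hd1' : d^2 < 1 := lt_of_le_of_ne hd hd1
      have hcd1 : (c*d)^2 ≠ 1 := by
        have : (c*d)^2 < 1 := by nlinarith [sq_nonneg c, sq_nonneg d]
        linarith
      have hU1 := hu1.resolve_left hd1
      have hU2 := hu2.resolve_left hcd1
      have h := norm_sq3 u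
      rw [hu, hU0, hU1, hU2] at h
      norm_num at h
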